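/- Let D be an integral domain. Then D is a Prüfer v-multiplication domain if and only if D is an essential domain and there exists an essential representation {D_p : p ∈ Y} of D, for some Y ⊆ Spec(D), such that the constructible-topology closure of Y is contained in ℰ(D) = {p ∈ Spec(D) : D_p is a valuation domain}. -/

import Mathlib

open scoped nonZeroDivisors

/-- The localization of `R` at the prime `p`, viewed inside a field `K` to which `R` maps. -/
def locg {R K : Type*} [CommRing R] [Field K] [Algebra R K] (p : PrimeSpectrum R) :
    Subring K where
  carrier := {x : K | ∃ a b : R, b ∉ p.asIdeal ∧ x * algebraMap R K b = algebraMap R K a}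
  zero_mem' := ⟨0, 1, fun h => p.2.ne_top ((Ideal.eq_top_iff_one _).2 h), by simp⟩
  one_mem' := ⟨1, 1, fun h => p.2.ne_top ((Ideal.eq_top_iff_one _).2 h), by simp⟩
  add_mem' := by
    rintro x y ⟨a₁, b₁, hb₁, e₁⟩ ⟨a₂, b₂, hb₂, e₂⟩
    exact ⟨a₁ * b₂ + a₂ * b₁, b₁ * b₂,
      fun h => ((p.2.mem_or_mem h).elim hb₁ hb₂), by
        rw [map_add, map_mul, map_mul, map_mul]
        linear_combination (algebraMap R K b₂) * e₁ + (algebraMap R K b₁) * e₂⟩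
  mul_mem' := by
    rintro x y ⟨a₁, b₁, hb₁, e₁⟩ ⟨a₂, b₂, hb₂, e₂⟩
    exact ⟨a₁ * a₂, b₁ * b₂,
      fun h => ((p.2.mem_or_mem h).elim hb₁ hb₂), by
        rw [map_mul, map_mul, show x * y * (algebraMap R K b₁ * algebraMap R K b₂)
          = (x * algebraMap R K b₁) * (y * algebraMap R K b₂) by ring, e₁, e₂]⟩
  neg_mem' := by
    rintro x ⟨a, b, hb, e⟩
    exact ⟨-a, b, hb, by rw [map_neg, neg_mul, e]⟩
/-- `I` is a `t`-ideal: its `t`-closure is contained in (hence equal to) `I`. -/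
def IsTIdeal (R : Type*) [CommRing R] [IsDomain R] (I : Ideal R) : Prop :=
  ∀ x : R, (∃ J : Ideal R, J.FG ∧ J ≤ I ∧
    algebraMap R (FractionRing R) x ∈
      (1 / (1 / (J : FractionalIdeal R⁰ (FractionRing R))))) → x ∈ I

/-- `M` is a `t`-maximal ideal: maximal among proper `t`-ideals. -/
def IsTMax (R : Type*) [CommRing R] [IsDomain R] (M : Ideal R) : Prop :=
  IsTIdeal R M ∧ M ≠ ⊤ ∧ ∀ I : Ideal R, IsTIdeal R I → I ≠ ⊤ → M ≤ I → I = M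
/-- `R` is a Prüfer `v`-multiplication domain: the localization at every `t`-maximal
ideal is a valuation domain. -/
def IsPvMD (R : Type*) [CommRing R] [IsDomain R] : Prop :=
  ∀ M : Ideal R, IsTMax R M → ∀ hM : M.IsPrime,
    ValuationRing (locg (K := FractionRing R) ⟨M, hM⟩)
/-- The essential prime spectrum: the primes at which the localization is a valuation
domain. -/
def EssSpec (R : Type*) [CommRing R] [IsDomain R] : Set (PrimeSpectrum R) :=
  {p : PrimeSpectrum R | ValuationRing (locg (K := FractionRing R) p)}

/-- `{D_p : p ∈ Y}` is an essential representation of `R`: each localization is a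
valuation domain, and their intersection (inside the quotient field) is `R`. -/
def IsEssentialRep (R : Type*) [CommRing R] [IsDomain R] (Y : Set (PrimeSpectrum R)) : Prop :=
  (∀ p ∈ Y, ValuationRing (locg (K := FractionRing R) p)) ∧
    (⨅ p ∈ Y, locg (K := FractionRing R) p) = (algebraMap R (FractionRing R)).range

/-- `R` is an essential domain. -/
def IsEssential (R : Type*) [CommRing R] [IsDomain R] : Prop :=
  ∃ Y : Set (PrimeSpectrum R), IsEssentialRep R Y
/-- The constructible (patch) topology on the prime spectrum: the coarsest topology in
which every basic open `D(f)` is clopen. -/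
def constructibleTop (A : Type*) [CommRing A] : TopologicalSpace (PrimeSpectrum A) :=
  TopologicalSpace.generateFrom
    {s | (∃ f : A, s = {p : PrimeSpectrum A | f ∉ p.asIdeal}) ∨
      (∃ f : A, s = {p : PrimeSpectrum A | f ∈ p.asIdeal})}


section Helpers

open FractionalIdeal

variable {R : Type*} [CommRing R] [IsDomain R]

/-- The divisorial closure of an ideal, as a fractional ideal. -/
noncomputable def vv (J : Ideal R) : FractionalIdeal R⁰ (FractionRing R) :=
  1 / (1 / (J : FractionalIdeal R⁰ (FractionRing R)))

lemma range_le_locg (p : PrimeSpectrum R) :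
    ((algebraMap R (FractionRing R)).range : Subring (FractionRing R)) ≤
      locg (K := FractionRing R) p := by
  rintro x ⟨r, rfl⟩
  exact ⟨r, 1, fun h => p.2.ne_top ((Ideal.eq_top_iff_one _).2 h), by simp⟩

lemma locg_anti {p q : PrimeSpectrum R} (h : p.asIdeal ≤ q.asIdeal) :
    locg (K := FractionRing R) q ≤ locg (K := FractionRing R) p := by
  rintro x ⟨a, b, hb, e⟩
  exact ⟨a, b, fun hb' => hb (h hb'), e⟩

lemma coeIdeal_ne_zero' {J : Ideal R} (hJ : J ≠ ⊥) :
    (J : FractionalIdeal R⁰ (FractionRing R)) ≠ 0 :=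
  FractionalIdeal.coeIdeal_ne_zero.2 hJ

lemma one_div_coe_ne_zero {J : Ideal R} (hJ : J ≠ ⊥) :
    (1 / (J : FractionalIdeal R⁰ (FractionRing R))) ≠ 0 := by
  intro h
  have h1 : (1 : FractionRing R) ∈ (1 / (J : FractionalIdeal R⁰ (FractionRing R))) := by
    rw [mem_div_iff_of_ne_zero (coeIdeal_ne_zero' hJ)]
    intro y hy
    rw [one_mul]
    obtain ⟨j, hj, rfl⟩ := (FractionalIdeal.mem_coeIdeal _).1 hy
    exact FractionalIdeal.coe_mem_one _ j
  rw [h] at h1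
  exact one_ne_zero ((FractionalIdeal.mem_zero_iff _).1 h1)

lemma mem_one_div_coe_iff {J : Ideal R} (hJ : J ≠ ⊥) {z : FractionRing R} :
    z ∈ (1 / (J : FractionalIdeal R⁰ (FractionRing R))) ↔
      ∀ j ∈ J, z * algebraMap R (FractionRing R) j ∈
        (1 : FractionalIdeal R⁰ (FractionRing R)) := by
  rw [mem_div_iff_of_ne_zero (coeIdeal_ne_zero' hJ)]
  constructor
  · intro h j hj
    exact h _ ((FractionalIdeal.mem_coeIdeal _).2 ⟨j, hj, rfl⟩)
  · intro h y hy
    obtain ⟨j, hj, rfl⟩ := (FractionalIdeal.mem_coeIdeal _).1 hy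
    exact h j hj

lemma mem_vv_iff {J : Ideal R} (hJ : J ≠ ⊥) {x : FractionRing R} :
    x ∈ vv J ↔ ∀ z : FractionRing R,
      (∀ j ∈ J, z * algebraMap R (FractionRing R) j ∈
        (1 : FractionalIdeal R⁰ (FractionRing R))) →
      x * z ∈ (1 : FractionalIdeal R⁰ (FractionRing R)) := by
  unfold vv
  constructor
  · intro h z hz
    exact (FractionalIdeal.mem_div_iff_of_ne_zero (one_div_coe_ne_zero hJ)).1 h z
      ((mem_one_div_coe_iff hJ).2 hz)
  · intro h
    exact (FractionalIdeal.mem_div_iff_of_ne_zero (one_div_coe_ne_zero hJ)).2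
      fun z hz => h z ((mem_one_div_coe_iff hJ).1 hz)

lemma mem_vv_bot {x : FractionRing R} : x ∈ vv (⊥ : Ideal R) ↔ x = 0 := by
  rw [vv, FractionalIdeal.coeIdeal_bot, FractionalIdeal.div_zero, FractionalIdeal.div_zero]
  exact FractionalIdeal.mem_zero_iff _

lemma self_mem_vv {J : Ideal R} {x : R} (hx : x ∈ J) :
    algebraMap R (FractionRing R) x ∈ vv J := by
  rcases eq_or_ne J ⊥ with rfl | hJ
  · simp only [Ideal.mem_bot] at hx
    subst hx
    rw [_root_.map_zero]
    exact zero_mem _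
  · rw [mem_vv_iff hJ]
    intro z hz
    rw [mul_comm]
    exact hz x hx

lemma vv_mono {J₁ J₂ : Ideal R} (h : J₁ ≤ J₂) {x : FractionRing R} (hx : x ∈ vv J₁) :
    x ∈ vv J₂ := by
  rcases eq_or_ne J₁ ⊥ with rfl | hJ₁
  · rw [mem_vv_bot] at hx
    subst hx
    exact zero_mem _
  · have hJ₂ : J₂ ≠ ⊥ := fun h2 => hJ₁ (le_bot_iff.1 (h2 ▸ h))
    rw [mem_vv_iff hJ₁] at hx
    rw [mem_vv_iff hJ₂]
    exact fun z hz => hx z fun j hj => hz j (h hj)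

end Helpers

section Tcl

open FractionalIdeal

variable {R : Type*} [CommRing R] [IsDomain R]

lemma fi_add_mem (I : FractionalIdeal R⁰ (FractionRing R)) {x y : FractionRing R}
    (hx : x ∈ I) (hy : y ∈ I) : x + y ∈ I := by
  rw [← FractionalIdeal.mem_coe] at *
  exact Submodule.add_mem _ hx hy

lemma fi_smul_mem (I : FractionalIdeal R⁰ (FractionRing R)) (r : R) {x : FractionRing R}
    (hx : x ∈ I) : r • x ∈ I := by
  rw [← FractionalIdeal.mem_coe] at *
  exact Submodule.smul_mem _ r hx

lemma vv_def (J : Ideal R) :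
    vv J = 1 / (1 / (J : FractionalIdeal R⁰ (FractionRing R))) := rfl

/-- The `t`-closure of an ideal. -/
noncomputable def tcl (I : Ideal R) : Ideal R where
  carrier := {x | ∃ J : Ideal R, J.FG ∧ J ≤ I ∧ algebraMap R (FractionRing R) x ∈ vv J}
  zero_mem' := ⟨⊥, Submodule.fg_bot, bot_le, by
    rw [_root_.map_zero]; exact zero_mem _⟩
  add_mem' := by
    rintro x y ⟨J₁, h₁f, h₁l, h₁⟩ ⟨J₂, h₂f, h₂l, h₂⟩
    exact ⟨J₁ ⊔ J₂, Submodule.FG.sup h₁f h₂f, sup_le h₁l h₂l, by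
      rw [_root_.map_add]
      exact fi_add_mem _ (vv_mono le_sup_left h₁) (vv_mono le_sup_right h₂)⟩
  smul_mem' := by
    rintro c x ⟨J, hf, hl, h⟩
    refine ⟨J, hf, hl, ?_⟩
    rw [smul_eq_mul, _root_.map_mul, ← Algebra.smul_def]
    exact fi_smul_mem _ c h

lemma le_tcl (I : Ideal R) : I ≤ tcl I := by
  intro x hx
  exact ⟨Ideal.span {x}, ⟨{x}, by simp⟩, Ideal.span_le.2 (Set.singleton_subset_iff.2 hx),
    self_mem_vv (Ideal.subset_span rfl)⟩

lemma tcl_isTIdeal (I : Ideal R) : IsTIdeal R (tcl I) := by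
  rintro x ⟨J, hJfg, hJle, hx⟩
  obtain ⟨s, rfl⟩ := hJfg
  -- choose witnessing ideals for generators
  have hgen : ∀ a : R, ∃ Ja : Ideal R, Ja.FG ∧ Ja ≤ I ∧
      ((a : R) ∈ (s : Set R) → algebraMap R (FractionRing R) a ∈ vv Ja) := by
    intro a
    by_cases ha : (a : R) ∈ (s : Set R)
    · obtain ⟨Ja, h1, h2, h3⟩ := hJle (Ideal.subset_span ha)
      exact ⟨Ja, h1, h2, fun _ => h3⟩
    · exact ⟨⊥, Submodule.fg_bot, bot_le, fun h => absurd h ha⟩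
  choose Ja hfg hle hv using hgen
  set Jstar : Ideal R := s.sup Ja with hJstar
  have hJstarfg : Jstar.FG := Finset.sup_induction Submodule.fg_bot (fun a ha b hb => Submodule.FG.sup ha hb)
    (fun a _ => hfg a)
  have hJstarle : Jstar ≤ I := Finset.sup_le fun a _ => hle a
  rw [← vv_def] at hx
  by_cases hbot : Ideal.span (s : Set R) = ⊥
  · -- then x = 0
    rw [hbot] at hx
    have hx0 : x = 0 := IsFractionRing.injective R (FractionRing R)
      (by rw [mem_vv_bot.1 hx, _root_.map_zero])
    rw [hx0]
    exact zero_mem _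
  · -- main case
    have hJstarbot : Jstar ≠ ⊥ := by
      intro hb
      apply hbot
      rw [eq_bot_iff, Ideal.span_le]
      intro a ha
      have hva := hv a ha
      have : Ja a = ⊥ := le_bot_iff.1 (hb ▸ Finset.le_sup (f := Ja) ha)
      rw [this] at hva
      have : algebraMap R (FractionRing R) a = 0 := mem_vv_bot.1 hva
      have ha0 : a = 0 := IsFractionRing.injective R (FractionRing R)
        (by rw [this, _root_.map_zero])
      simp [ha0]
    refine ⟨Jstar, hJstarfg, hJstarle, ?_⟩
    rw [mem_vv_iff hJstarbot]
    intro z hz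
    -- z is compatible with every generator's ideal, hence with span s
    have hzs : ∀ j ∈ Ideal.span (s : Set R),
        z * algebraMap R (FractionRing R) j ∈ (1 : FractionalIdeal R⁰ (FractionRing R)) := by
      intro j hj
      refine Submodule.span_induction ?_ ?_ ?_ ?_ hj
      · intro a ha
        have hva := hv a ha
        rcases eq_or_ne (Ja a) ⊥ with hb | hb
        · rw [hb] at hva
          have : algebraMap R (FractionRing R) a = 0 := mem_vv_bot.1 hva
          rw [this, mul_zero]
          exact zero_mem _
        · rw [mem_vv_iff hb] at hva
          have := hva z (fun j hj => hz j (Finset.le_sup (f := Ja) ha hj))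
          rw [mul_comm] at this
          exact this
      · rw [_root_.map_zero, mul_zero]; exact zero_mem _
      · intro a b _ _ ha hb
        rw [_root_.map_add, mul_add]; exact fi_add_mem _ ha hb
      · intro r a _ ha
        rw [smul_eq_mul, _root_.map_mul, show z * (algebraMap R (FractionRing R) r *
          algebraMap R (FractionRing R) a) = r • (z * algebraMap R (FractionRing R) a) by
            rw [Algebra.smul_def]; ring]
        exact fi_smul_mem _ r ha
    rw [mem_vv_iff hbot] at hx
    exact hx z hzs

end Tcl

section TMax

open FractionalIdeal

variable {R : Type*} [CommRing R] [IsDomain R]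

lemma vv_bot_ne_one : (1 : R) ∉ {x : R | algebraMap R (FractionRing R) x ∈ vv (⊥ : Ideal R)} := by
  intro h
  have := mem_vv_bot.1 h
  rw [_root_.map_one] at this
  exact one_ne_zero this

lemma tmax_exists_unit_ideal {M : Ideal R} (hM : IsTMax R M) {a : R} (ha : a ∉ M) :
    ∃ A : Ideal R, A.FG ∧ A ≤ M ⊔ Ideal.span {a} ∧
      algebraMap R (FractionRing R) 1 ∈ vv A := by
  by_cases h1 : (1 : R) ∈ tcl (M ⊔ Ideal.span {a})
  · exact h1
  · exfalso
    have hC : tcl (M ⊔ Ideal.span {a}) ≠ ⊤ := fun h => h1 (h ▸ Submodule.mem_top)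
    have hMC : M ≤ tcl (M ⊔ Ideal.span {a}) := le_sup_left.trans (le_tcl _)
    have := hM.2.2 _ (tcl_isTIdeal _) hC hMC
    apply ha
    rw [← this]
    exact le_tcl _ (le_sup_right (a := M) (Ideal.subset_span rfl))

lemma vv_mul_one_mem {A B : Ideal R}
    (hA : algebraMap R (FractionRing R) 1 ∈ vv A)
    (hB : algebraMap R (FractionRing R) 1 ∈ vv B) :
    algebraMap R (FractionRing R) 1 ∈ vv (A * B) := by
  have hAbot : A ≠ ⊥ := by
    rintro rfl
    rw [_root_.map_one] at hA
    exact one_ne_zero (mem_vv_bot.1 hA)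
  have hBbot : B ≠ ⊥ := by
    rintro rfl
    rw [_root_.map_one] at hB
    exact one_ne_zero (mem_vv_bot.1 hB)
  have hABbot : A * B ≠ ⊥ := fun h => (Ideal.mul_eq_bot.1 h).elim hAbot hBbot
  rw [mem_vv_iff hABbot]
  intro z hz
  rw [_root_.map_one, one_mul]
  -- show z ∈ 1
  have hcompA : ∀ a ∈ A, z * algebraMap R (FractionRing R) a ∈
      (1 : FractionalIdeal R⁰ (FractionRing R)) := by
    intro a ha
    have hcompB : ∀ b ∈ B, (z * algebraMap R (FractionRing R) a) *
        algebraMap R (FractionRing R) b ∈ (1 : FractionalIdeal R⁰ (FractionRing R)) := by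
      intro b hb
      rw [mul_assoc, ← _root_.map_mul]
      exact hz _ (Ideal.mul_mem_mul ha hb)
    have := (mem_vv_iff hBbot).1 hB _ hcompB
    rw [_root_.map_one, one_mul] at this
    exact this
  have := (mem_vv_iff hAbot).1 hA _ hcompA
  rw [_root_.map_one, one_mul] at this
  exact this

lemma tmax_isPrime {M : Ideal R} (hM : IsTMax R M) : M.IsPrime := by
  rw [Ideal.isPrime_iff]
  refine ⟨hM.2.1, ?_⟩
  intro a b hab
  by_contra hcon
  push_neg at hcon
  obtain ⟨ha, hb⟩ := hcon
  obtain ⟨A, hAfg, hAle, hA1⟩ := tmax_exists_unit_ideal hM ha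
  obtain ⟨B, hBfg, hBle, hB1⟩ := tmax_exists_unit_ideal hM hb
  have hABle : A * B ≤ M := by
    rw [Ideal.mul_le]
    intro x hx y hy
    obtain ⟨mx, hmx, sx, hsx, rfl⟩ := Submodule.mem_sup.1 (hAle hx)
    obtain ⟨my, hmy, sy, hsy, rfl⟩ := Submodule.mem_sup.1 (hBle hy)
    obtain ⟨rx, rfl⟩ := Ideal.mem_span_singleton'.1 hsx
    obtain ⟨ry, rfl⟩ := Ideal.mem_span_singleton'.1 hsy
    have : (mx + rx * a) * (my + ry * b) =
        mx * (my + ry * b) + my * (rx * a) + (rx * ry) * (a * b) := by ring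
    rw [this]
    exact add_mem (add_mem (M.mul_mem_right _ hmx) (M.mul_mem_right _ hmy))
      (M.mul_mem_left _ hab)
  have h1M : (1 : R) ∈ M :=
    hM.1 1 ⟨A * B, Submodule.FG.mul hAfg hBfg, hABle, vv_mul_one_mem hA1 hB1⟩
  exact hM.2.1 ((Ideal.eq_top_iff_one M).2 h1M)

lemma exists_tmax {I₀ : Ideal R} (hI₀ : IsTIdeal R I₀) (hne : I₀ ≠ ⊤) :
    ∃ M : Ideal R, IsTMax R M ∧ I₀ ≤ M := by
  set S : Set (Ideal R) := {I | IsTIdeal R I ∧ I ≠ ⊤}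
  have hzorn := zorn_le_nonempty₀ S ?_ I₀ ⟨hI₀, hne⟩
  · obtain ⟨M, hI₀M, hMS, hMmax⟩ := hzorn
    refine ⟨M, ⟨hMS.1, hMS.2, ?_⟩, hI₀M⟩
    intro I hIt hItop hMI
    exact le_antisymm (hMmax ⟨hIt, hItop⟩ hMI) hMI
  · intro c hcS hchain y hy
    refine ⟨sSup c, ⟨?_, ?_⟩, fun z hz => le_sSup hz⟩
    · -- sSup of a chain of t-ideals is a t-ideal
      intro x ⟨J, hJfg, hJle, hJv⟩
      have hdir : DirectedOn (· ≤ ·) c := hchain.directedOn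
      have hcomp : IsCompactElement J :=
        (Submodule.fg_iff_compact J).1 hJfg
      obtain ⟨I, hIc, hJI⟩ :=
        (CompleteLattice.isCompactElement_iff_le_of_directed_sSup_le _ J).1 hcomp c
          ⟨y, hy⟩ hdir hJle
      exact le_sSup hIc ((hcS hIc).1 x ⟨J, hJfg, hJI, hJv⟩)
    · -- proper
      intro htop
      have h1 : (1 : R) ∈ sSup c := htop ▸ Submodule.mem_top
      rw [Submodule.mem_sSup_of_directed ⟨y, hy⟩ hchain.directedOn] at h1
      obtain ⟨I, hIc, h1I⟩ := h1
      exact (hcS hIc).2 ((Ideal.eq_top_iff_one I).2 h1I)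

end TMax

section InterTmax

open FractionalIdeal

variable {R : Type*} [CommRing R] [IsDomain R]

lemma algR_ne_zero {r : R} (hr : r ≠ 0) : algebraMap R (FractionRing R) r ≠ 0 :=
  fun h => hr (IsFractionRing.to_map_eq_zero_iff.1 h)

lemma inter_tmax_eq_range :
    (⨅ p ∈ {p : PrimeSpectrum R | IsTMax R p.asIdeal}, locg (K := FractionRing R) p) =
      (algebraMap R (FractionRing R)).range := by
  refine le_antisymm ?_ (le_iInf₂ fun p _ => range_le_locg p)
  intro x hx
  by_contra hxr
  set I₀ : Ideal R :=
    { carrier := {r : R | ∃ c : R, x * algebraMap R (FractionRing R) r =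
        algebraMap R (FractionRing R) c}
      zero_mem' := ⟨0, by simp⟩
      add_mem' := by
        rintro a b ⟨c, hc⟩ ⟨d, hd⟩
        exact ⟨c + d, by rw [_root_.map_add, _root_.map_add, mul_add, hc, hd]⟩
      smul_mem' := by
        rintro r a ⟨c, hc⟩
        refine ⟨r * c, ?_⟩
        rw [smul_eq_mul, _root_.map_mul, _root_.map_mul, ← mul_assoc,
          mul_comm x, mul_assoc, hc] } with hI₀def
  have hI₀t : IsTIdeal R I₀ := by
    rintro w ⟨J, hJfg, hJle, hJv⟩
    rw [← vv_def] at hJv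
    rcases eq_or_ne J ⊥ with rfl | hJbot
    · have hw : w = 0 := IsFractionRing.injective R (FractionRing R)
        (by rw [mem_vv_bot.1 hJv, _root_.map_zero])
      rw [hw]; exact zero_mem _
    · have hcomp : ∀ j ∈ J, x * algebraMap R (FractionRing R) j ∈
          (1 : FractionalIdeal R⁰ (FractionRing R)) := by
        intro j hj
        obtain ⟨c, hc⟩ := hJle hj
        rw [hc]
        exact FractionalIdeal.coe_mem_one _ c
      have hmem := (mem_vv_iff hJbot).1 hJv x hcomp
      obtain ⟨c, hc⟩ := (FractionalIdeal.mem_one_iff _).1 hmem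
      exact ⟨c, by rw [mul_comm]; exact hc.symm⟩
  have hI₀ne : I₀ ≠ ⊤ := by
    intro h
    have h1 : (1 : R) ∈ I₀ := h ▸ Submodule.mem_top
    obtain ⟨c, hc⟩ := h1
    rw [_root_.map_one, mul_one] at hc
    exact hxr ⟨c, hc.symm⟩
  obtain ⟨M, hMt, hI₀M⟩ := exists_tmax hI₀t hI₀ne
  have hMp : M.IsPrime := tmax_isPrime hMt
  have hle : (⨅ p ∈ {p : PrimeSpectrum R | IsTMax R p.asIdeal},
      locg (K := FractionRing R) p) ≤ locg (K := FractionRing R) ⟨M, hMp⟩ :=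
    iInf₂_le (⟨M, hMp⟩ : PrimeSpectrum R)
      (show (⟨M, hMp⟩ : PrimeSpectrum R) ∈ {p : PrimeSpectrum R | IsTMax R p.asIdeal} from hMt)
  obtain ⟨a, b, hb, he⟩ := hle hx
  exact hb (hI₀M ⟨a, he⟩)

/-- The colon-type ideal `{r | r x ∈ (y)}`. -/
def colid (x y : R) : Ideal R where
  carrier := {r : R | ∃ e : R, r * x = e * y}
  zero_mem' := ⟨0, by ring⟩
  add_mem' := by
    rintro a b ⟨e, he⟩ ⟨f, hf⟩
    exact ⟨e + f, by rw [add_mul, he, hf]; ring⟩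
  smul_mem' := by
    rintro r a ⟨e, he⟩
    exact ⟨r * e, by rw [smul_eq_mul, mul_assoc, he]; ring⟩

lemma pvmd_dichotomy (hP : IsPvMD R) (x y : R) :
    ∃ J : Ideal R, J.FG ∧ J ≤ colid x y ⊔ colid y x ∧
      algebraMap R (FractionRing R) 1 ∈ vv J := by
  by_cases h1 : (1 : R) ∈ tcl (colid x y ⊔ colid y x)
  · exact h1
  exfalso
  have hC : tcl (colid x y ⊔ colid y x) ≠ ⊤ := fun h => h1 (h ▸ Submodule.mem_top)
  obtain ⟨M, hMt, hIM⟩ := exists_tmax (tcl_isTIdeal _) hC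
  have hMp : M.IsPrime := tmax_isPrime hMt
  haveI hV := hP M hMt hMp
  set p : PrimeSpectrum R := ⟨M, hMp⟩
  obtain ⟨c, hc | hc⟩ := ValuationRing.cond (A := locg (K := FractionRing R) p)
    ⟨algebraMap R (FractionRing R) x, range_le_locg p ⟨x, rfl⟩⟩
    ⟨algebraMap R (FractionRing R) y, range_le_locg p ⟨y, rfl⟩⟩
  · obtain ⟨e', d, hd, hcd⟩ := c.2
    have hval : algebraMap R (FractionRing R) x * (c : FractionRing R) =
        algebraMap R (FractionRing R) y := congrArg Subtype.val hc
    have hxy : algebraMap R (FractionRing R) (d * y) = algebraMap R (FractionRing R) (e' * x) := by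
      rw [_root_.map_mul, _root_.map_mul, ← hval, ← hcd]; ring
    have : d ∈ colid y x := ⟨e', IsFractionRing.injective R (FractionRing R) hxy⟩
    exact hd (hIM (le_tcl _ (Submodule.mem_sup_right this)))
  · obtain ⟨e', d, hd, hcd⟩ := c.2
    have hval : algebraMap R (FractionRing R) y * (c : FractionRing R) =
        algebraMap R (FractionRing R) x := congrArg Subtype.val hc
    have hxy : algebraMap R (FractionRing R) (d * x) = algebraMap R (FractionRing R) (e' * y) := by
      rw [_root_.map_mul, _root_.map_mul, ← hval, ← hcd]; ring
    have : d ∈ colid x y := ⟨e', IsFractionRing.injective R (FractionRing R) hxy⟩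
    exact hd (hIM (le_tcl _ (Submodule.mem_sup_left this)))

end InterTmax

section LemmaC

open FractionalIdeal

variable {R : Type*} [CommRing R] [IsDomain R]

lemma constructible_isOpen_mem (f : R) :
    @IsOpen _ (constructibleTop R) {p : PrimeSpectrum R | f ∈ p.asIdeal} :=
  TopologicalSpace.isOpen_generateFrom_of_mem (Or.inr ⟨f, rfl⟩)

lemma closure_tmax_subset_ess (hP : IsPvMD R) :
    @closure _ (constructibleTop R) {p : PrimeSpectrum R | IsTMax R p.asIdeal} ⊆ EssSpec R := by
  letI : TopologicalSpace (PrimeSpectrum R) := constructibleTop R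
  intro p hp
  show ValuationRing (locg (K := FractionRing R) p)
  refine @ValuationRing.mk _ _ _ ⟨fun a b => ?_⟩
  by_cases hb0 : (b : FractionRing R) = 0
  · exact ⟨0, Or.inl (Subtype.ext (by simp [hb0]))⟩
  by_cases ha0 : (a : FractionRing R) = 0
  · exact ⟨0, Or.inr (Subtype.ext (by simp [ha0]))⟩
  obtain ⟨A, S, hS, hSa⟩ := a.2
  obtain ⟨B, T, hT, hTb⟩ := b.2
  have hS0 : algebraMap R (FractionRing R) S ≠ 0 :=
    algR_ne_zero fun h => hS (h ▸ p.asIdeal.zero_mem)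
  have hT0 : algebraMap R (FractionRing R) T ≠ 0 :=
    algR_ne_zero fun h => hT (h ▸ p.asIdeal.zero_mem)
  -- the dichotomy of colon ideals at `p`
  have hnp : ¬(colid (A * T) (B * S) ≤ p.asIdeal ∧ colid (B * S) (A * T) ≤ p.asIdeal) := by
    rintro ⟨h1, h2⟩
    obtain ⟨J, hJfg, hJle, hJ1⟩ := pvmd_dichotomy hP (A * T) (B * S)
    obtain ⟨s, rfl⟩ := hJfg
    have hOopen : IsOpen {q : PrimeSpectrum R | ∀ g ∈ s, g ∈ q.asIdeal} := by
      have heq : {q : PrimeSpectrum R | ∀ g ∈ s, g ∈ q.asIdeal} =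
          ⋂ g ∈ s, {q : PrimeSpectrum R | g ∈ q.asIdeal} := by
        ext q; simp
      rw [heq]
      exact isOpen_biInter_finset fun g _ => constructible_isOpen_mem g
    have hpO : p ∈ {q : PrimeSpectrum R | ∀ g ∈ s, g ∈ q.asIdeal} := by
      intro g hg
      exact (sup_le h1 h2) (hJle (Ideal.subset_span hg))
    obtain ⟨M', hM'⟩ := mem_closure_iff.1 hp _ hOopen hpO
    have h1M : (1 : R) ∈ M'.asIdeal :=
      hM'.2.1 1 ⟨Ideal.span (s : Set R), ⟨s, rfl⟩,
        Ideal.span_le.2 fun g hg => hM'.1 g hg, hJ1⟩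
    exact hM'.2.2.1 ((Ideal.eq_top_iff_one _).2 h1M)
  rw [not_and_or, SetLike.not_le_iff_exists, SetLike.not_le_iff_exists] at hnp
  rcases hnp with ⟨r, ⟨e, hre⟩, hrp⟩ | ⟨r, ⟨e, hre⟩, hrp⟩
  · -- r * (A*T) = e * (B*S), conclude b ∣ a
    have hr0 : algebraMap R (FractionRing R) r ≠ 0 :=
      algR_ne_zero fun h => hrp (h ▸ p.asIdeal.zero_mem)
    refine ⟨⟨algebraMap R (FractionRing R) e * (algebraMap R (FractionRing R) r)⁻¹,
      e, r, hrp, by field_simp⟩, Or.inr (Subtype.ext ?_)⟩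
    show (b : FractionRing R) * (algebraMap R (FractionRing R) e *
      (algebraMap R (FractionRing R) r)⁻¹) = (a : FractionRing R)
    have her' : algebraMap R (FractionRing R) r *
        (algebraMap R (FractionRing R) A * algebraMap R (FractionRing R) T) =
        algebraMap R (FractionRing R) e *
        (algebraMap R (FractionRing R) B * algebraMap R (FractionRing R) S) := by
      simpa only [_root_.map_mul] using congrArg (algebraMap R (FractionRing R)) hre
    have h2 : (b : FractionRing R) * algebraMap R (FractionRing R) e *
        (algebraMap R (FractionRing R) S * algebraMap R (FractionRing R) T) =
        (a : FractionRing R) * algebraMap R (FractionRing R) r *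
        (algebraMap R (FractionRing R) S * algebraMap R (FractionRing R) T) := by
      linear_combination (algebraMap R (FractionRing R) e * algebraMap R (FractionRing R) S) *
        hTb - (algebraMap R (FractionRing R) r * algebraMap R (FractionRing R) T) * hSa - her'
    have h3 := mul_right_cancel₀ (mul_ne_zero hS0 hT0) h2
    field_simp
    linear_combination h3
  · -- r * (B*S) = e * (A*T), conclude a ∣ b
    have hr0 : algebraMap R (FractionRing R) r ≠ 0 :=
      algR_ne_zero fun h => hrp (h ▸ p.asIdeal.zero_mem)
    refine ⟨⟨algebraMap R (FractionRing R) e * (algebraMap R (FractionRing R) r)⁻¹,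
      e, r, hrp, by field_simp⟩, Or.inl (Subtype.ext ?_)⟩
    show (a : FractionRing R) * (algebraMap R (FractionRing R) e *
      (algebraMap R (FractionRing R) r)⁻¹) = (b : FractionRing R)
    have her' : algebraMap R (FractionRing R) r *
        (algebraMap R (FractionRing R) B * algebraMap R (FractionRing R) S) =
        algebraMap R (FractionRing R) e *
        (algebraMap R (FractionRing R) A * algebraMap R (FractionRing R) T) := by
      simpa only [_root_.map_mul] using congrArg (algebraMap R (FractionRing R)) hre
    have h2 : (a : FractionRing R) * algebraMap R (FractionRing R) e *
        (algebraMap R (FractionRing R) S * algebraMap R (FractionRing R) T) =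
        (b : FractionRing R) * algebraMap R (FractionRing R) r *
        (algebraMap R (FractionRing R) S * algebraMap R (FractionRing R) T) := by
      linear_combination (algebraMap R (FractionRing R) e * algebraMap R (FractionRing R) T) *
        hSa - (algebraMap R (FractionRing R) r * algebraMap R (FractionRing R) S) * hTb - her'
    have h3 := mul_right_cancel₀ (mul_ne_zero hS0 hT0) h2
    field_simp
    linear_combination h3

end LemmaC

section Main

open FractionalIdeal

variable {R : Type*} [CommRing R] [IsDomain R]

lemma valuation_of_le {V W : Subring (FractionRing R)}
    (hRV : ((algebraMap R (FractionRing R)).range : Subring (FractionRing R)) ≤ V)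
    (hVW : V ≤ W) (hV : ValuationRing V) : ValuationRing W := by
  refine @ValuationRing.mk _ _ _ ⟨fun a b => ?_⟩
  by_cases hb0 : (b : FractionRing R) = 0
  · exact ⟨0, Or.inl (Subtype.ext (by simp [hb0]))⟩
  by_cases ha0 : (a : FractionRing R) = 0
  · exact ⟨0, Or.inr (Subtype.ext (by simp [ha0]))⟩
  obtain ⟨r, s, hs, hx⟩ := IsFractionRing.div_surjective (A := R)
    ((a : FractionRing R) / (b : FractionRing R))
  have hs0 : algebraMap R (FractionRing R) s ≠ 0 :=
    algR_ne_zero (nonZeroDivisors.ne_zero hs)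
  have hr0 : algebraMap R (FractionRing R) r ≠ 0 := by
    intro h
    rw [h, zero_div] at hx
    exact ha0 (by
      field_simp at hx
      exact hx.symm.trans (zero_mul _))
  obtain ⟨c, hc | hc⟩ := @ValuationRing.cond _ _ hV.toPreValuationRing
    ⟨algebraMap R (FractionRing R) r, hRV ⟨r, rfl⟩⟩
    ⟨algebraMap R (FractionRing R) s, hRV ⟨s, rfl⟩⟩
  · -- alg r * c = alg s, so c = s/r, a * c = b
    have hval : algebraMap R (FractionRing R) r * (c : FractionRing R) =
        algebraMap R (FractionRing R) s := congrArg Subtype.val hc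
    refine ⟨⟨(c : FractionRing R), hVW c.2⟩, Or.inl (Subtype.ext ?_)⟩
    show (a : FractionRing R) * (c : FractionRing R) = (b : FractionRing R)
    have hcval : (c : FractionRing R) = algebraMap R (FractionRing R) s /
        algebraMap R (FractionRing R) r := by
      field_simp [← hval]
      rw [mul_comm, hval]
    have hx' : algebraMap R (FractionRing R) r * (b : FractionRing R) =
        (a : FractionRing R) * algebraMap R (FractionRing R) s := by
      field_simp at hx
      linear_combination hx
    rw [hcval]
    field_simp
    linear_combination -hx'
  · -- alg s * c = alg r, so c = r/s, b * c = a
    have hval : algebraMap R (FractionRing R) s * (c : FractionRing R) =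
        algebraMap R (FractionRing R) r := congrArg Subtype.val hc
    refine ⟨⟨(c : FractionRing R), hVW c.2⟩, Or.inr (Subtype.ext ?_)⟩
    show (b : FractionRing R) * (c : FractionRing R) = (a : FractionRing R)
    have hcval : (c : FractionRing R) = algebraMap R (FractionRing R) r /
        algebraMap R (FractionRing R) s := by
      field_simp [← hval]
      rw [mul_comm, hval]
    have hx' : algebraMap R (FractionRing R) r * (b : FractionRing R) =
        (a : FractionRing R) * algebraMap R (FractionRing R) s := by
      field_simp at hx
      linear_combination hx
    rw [hcval]
    field_simp
    linear_combination hx'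

end Main

section Assembly

open FractionalIdeal

theorem isPvMD_iff_essentialRep_closure_subset' {R : Type*} [CommRing R] [IsDomain R] :
    IsPvMD R ↔
      IsEssential R ∧ ∃ Y : Set (PrimeSpectrum R), IsEssentialRep R Y ∧
        @closure _ (constructibleTop R) Y ⊆ EssSpec R := by
  constructor
  · intro hP
    letI : TopologicalSpace (PrimeSpectrum R) := constructibleTop R
    have hvalT : ∀ p ∈ {p : PrimeSpectrum R | IsTMax R p.asIdeal},
        ValuationRing (locg (K := FractionRing R) p) := fun p hp => hP p.asIdeal hp p.2
    have hrepT : IsEssentialRep R {p : PrimeSpectrum R | IsTMax R p.asIdeal} :=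
      ⟨hvalT, inter_tmax_eq_range⟩
    refine ⟨⟨_, hrepT⟩, closure {p : PrimeSpectrum R | IsTMax R p.asIdeal},
      ⟨fun p hp => closure_tmax_subset_ess hP hp, ?_⟩, ?_⟩
    · refine le_antisymm ?_ (le_iInf₂ fun p _ => range_le_locg p)
      refine le_trans ?_ inter_tmax_eq_range.le
      exact le_iInf₂ fun p hp => iInf₂_le p (subset_closure hp)
    · rw [closure_closure]
      exact closure_tmax_subset_ess hP
  · rintro ⟨_, Y, ⟨hval, hint⟩, hcl⟩
    intro M hMt hMp
    rcases Set.eq_empty_or_nonempty Y with rfl | ⟨q₀, hq₀⟩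
    · -- Y empty : the fraction field equals R
      rw [iInf_emptyset] at hint
      refine @ValuationRing.mk _ _ _ ⟨fun a b => ?_⟩
      by_cases hb0 : (b : FractionRing R) = 0
      · exact ⟨0, Or.inl (Subtype.ext (by simp [hb0]))⟩
      obtain ⟨r, hr⟩ : ((a : FractionRing R) / (b : FractionRing R)) ∈
          ((algebraMap R (FractionRing R)).range : Subring (FractionRing R)) := by
        rw [← hint]
        exact Subring.mem_top _
      refine ⟨⟨algebraMap R (FractionRing R) r,
        range_le_locg _ ⟨r, rfl⟩⟩, Or.inr (Subtype.ext ?_)⟩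
      show (b : FractionRing R) * algebraMap R (FractionRing R) r = (a : FractionRing R)
      rw [hr]
      field_simp
    · -- Y nonempty
      have key : ∀ G : Finset R, (↑G : Set R) ⊆ (M : Set R) →
          ∃ q ∈ Y, ∀ g ∈ G, g ∈ q.asIdeal := by
        intro G hG
        by_contra hcon
        push_neg at hcon
        have hJbot : Ideal.span (G : Set R) ≠ ⊥ := by
          intro hb
          obtain ⟨g, hgG, hgq⟩ := hcon q₀ hq₀
          have hmem : g ∈ Ideal.span (G : Set R) := Ideal.subset_span hgG
          rw [hb, Submodule.mem_bot] at hmem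
          exact hgq (hmem ▸ q₀.asIdeal.zero_mem)
        have h1 : (1 : R) ∈ M := by
          apply hMt.1 1
          refine ⟨Ideal.span (G : Set R), ⟨G, rfl⟩, Ideal.span_le.2 hG, ?_⟩
          show algebraMap R (FractionRing R) 1 ∈ vv (Ideal.span (G : Set R))
          rw [mem_vv_iff hJbot]
          intro z hz
          rw [_root_.map_one, one_mul, FractionalIdeal.mem_one_iff]
          have hz' : z ∈ ((algebraMap R (FractionRing R)).range : Subring (FractionRing R)) := by
            rw [← hint]
            rw [Subring.mem_iInf]
            intro q
            rw [Subring.mem_iInf]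
            intro hq
            obtain ⟨g, hgG, hgq⟩ := hcon q hq
            obtain ⟨w, hw⟩ := (FractionalIdeal.mem_one_iff _).1 (hz g (Ideal.subset_span hgG))
            exact ⟨w, g, hgq, hw.symm⟩
          exact hz'
        exact hMt.2.1 ((Ideal.eq_top_iff_one M).2 h1)
      classical
      set 𝒮 : Set (Set (PrimeSpectrum R)) :=
        insert Y {t | ∃ g ∈ M, t = {q : PrimeSpectrum R | g ∈ q.asIdeal}} with h𝒮
      have hFIP : ∀ t ⊆ 𝒮, t.Finite → (⋂₀ t).Nonempty := by
        intro t ht htfin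
        set f : Set (PrimeSpectrum R) → R := fun C =>
          if h : ∃ g ∈ M, C = {q : PrimeSpectrum R | g ∈ q.asIdeal} then h.choose else 0
          with hf
        have hfM : ∀ C, f C ∈ M := by
          intro C
          by_cases h : ∃ g ∈ M, C = {q : PrimeSpectrum R | g ∈ q.asIdeal}
          · simp only [hf, dif_pos h]
            exact h.choose_spec.1
          · simp only [hf, dif_neg h]
            exact M.zero_mem
        have hfC : ∀ C ∈ t, C = Y ∨ C = {q : PrimeSpectrum R | f C ∈ q.asIdeal} := by
          intro C hC
          rcases ht hC with h | h
          · exact Or.inl h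
          · right
            have h' : ∃ g ∈ M, C = {q : PrimeSpectrum R | g ∈ q.asIdeal} := h
            simp only [hf, dif_pos h']
            exact h'.choose_spec.2
        have hGfin : (f '' t).Finite := htfin.image f
        obtain ⟨q, hqY, hq⟩ := key hGfin.toFinset (by
          intro g hg
          rw [Finset.mem_coe, Set.Finite.mem_toFinset] at hg
          obtain ⟨C, _, rfl⟩ := hg
          exact hfM C)
        refine ⟨q, Set.mem_sInter.2 ?_⟩
        intro C hC
        rcases hfC C hC with rfl | hCeq
        · exact hqY
        · rw [hCeq]
          exact hq (f C) ((Set.Finite.mem_toFinset _).2 ⟨C, hC, rfl⟩)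
      haveI hFne : (Filter.generate 𝒮).NeBot := Filter.generate_neBot_iff.2 hFIP
      set U : Ultrafilter (PrimeSpectrum R) := Ultrafilter.of (Filter.generate 𝒮) with hU
      have hUmem : ∀ s ∈ 𝒮, s ∈ U := fun s hs =>
        Ultrafilter.of_le (Filter.generate 𝒮) (Filter.mem_generate_of_mem hs)
      have hYU : Y ∈ U := hUmem Y (Set.mem_insert _ _)
      set P : Ideal R :=
        { carrier := {r : R | {q : PrimeSpectrum R | r ∈ q.asIdeal} ∈ U}
          zero_mem' := by
            have h0 : {q : PrimeSpectrum R | (0 : R) ∈ q.asIdeal} = Set.univ := by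
              ext q
              simp [q.asIdeal.zero_mem]
            show {q : PrimeSpectrum R | (0 : R) ∈ q.asIdeal} ∈ U
            rw [h0]
            exact Filter.univ_mem
          add_mem' := by
            intro a b ha hb
            refine Filter.mem_of_superset (Filter.inter_mem ha hb) ?_
            rintro q ⟨hqa, hqb⟩
            exact q.asIdeal.add_mem hqa hqb
          smul_mem' := by
            intro r a ha
            refine Filter.mem_of_superset ha ?_
            intro q hq
            exact Ideal.mul_mem_left _ r hq } with hPdef
      have hPprime : P.IsPrime := by
        constructor
        · intro htop
          have h1 : (1 : R) ∈ P := htop ▸ Submodule.mem_top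
          have hempty : {q : PrimeSpectrum R | (1 : R) ∈ q.asIdeal} = ∅ := by
            ext q
            simp only [Set.mem_setOf_eq, Set.mem_empty_iff_false, iff_false]
            exact fun h => q.2.ne_top ((Ideal.eq_top_iff_one _).2 h)
          have h1' : {q : PrimeSpectrum R | (1 : R) ∈ q.asIdeal} ∈ U := h1
          rw [hempty] at h1'
          exact Filter.empty_notMem _ h1'
        · intro a b hab
          have hsub : {q : PrimeSpectrum R | a * b ∈ q.asIdeal} ⊆
              {q : PrimeSpectrum R | a ∈ q.asIdeal} ∪ {q : PrimeSpectrum R | b ∈ q.asIdeal} :=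
            fun q hq => q.2.mem_or_mem hq
          exact Ultrafilter.union_mem_iff.1 (Filter.mem_of_superset hab hsub)
      have hMP : M ≤ P := fun g hg => hUmem _ (Set.mem_insert_of_mem _ ⟨g, hg, rfl⟩)
      letI : TopologicalSpace (PrimeSpectrum R) := constructibleTop R
      set pP : PrimeSpectrum R := ⟨P, hPprime⟩ with hpP
      have hopenU : ∀ O : Set (PrimeSpectrum R), IsOpen O → pP ∈ O → O ∈ U := by
        intro O hO
        have hO' : TopologicalSpace.GenerateOpen
            {s | (∃ f : R, s = {p : PrimeSpectrum R | f ∉ p.asIdeal}) ∨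
              (∃ f : R, s = {p : PrimeSpectrum R | f ∈ p.asIdeal})} O := hO
        clear hO
        induction hO' with
        | basic s hs =>
          intro hps
          rcases hs with ⟨g, rfl⟩ | ⟨g, rfl⟩
          · have hnot : {q : PrimeSpectrum R | g ∈ q.asIdeal} ∉ U := hps
            have hcompl := Ultrafilter.compl_mem_iff_notMem.2 hnot
            have heq : {q : PrimeSpectrum R | g ∈ q.asIdeal}ᶜ =
                {p : PrimeSpectrum R | g ∉ p.asIdeal} := rfl
            rw [heq] at hcompl
            exact hcompl
          · exact hps
        | univ => exact fun _ => Filter.univ_mem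
        | inter s t _ _ ihs iht => exact fun hpst => Filter.inter_mem (ihs hpst.1) (iht hpst.2)
        | sUnion S _ ih =>
          intro hpS
          obtain ⟨s, hsS, hps⟩ := hpS
          exact Filter.mem_of_superset (ih s hsS hps) (Set.subset_sUnion_of_mem hsS)
      have hpPcl : pP ∈ closure Y := by
        rw [mem_closure_iff]
        intro O hO hpO
        exact Filter.nonempty_of_mem (Filter.inter_mem (hopenU O hO hpO) hYU)
      have hVP : ValuationRing (locg (K := FractionRing R) pP) := hcl hpPcl
      exact valuation_of_le (range_le_locg pP) (locg_anti hMP) hVP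

end Assembly

theorem isPvMD_iff_essentialRep_closure_subset {R : Type*} [CommRing R] [IsDomain R] :
    IsPvMD R ↔
      IsEssential R ∧ ∃ Y : Set (PrimeSpectrum R), IsEssentialRep R Y ∧
        @closure _ (constructibleTop R) Y ⊆ EssSpec R :=
  isPvMD_iff_essentialRep_closure_subset'
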